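/- Let f be an approximately concave function, let k ≥ 2 be a cache size such that k+1 lies in the range of f, and let A be any deterministic cache replacement policy with cache size k, initialized with an arbitrary full cache of k pages. Then for every N there exists a page request sequence of length at least N that conforms to f and on which the fault rate of A is at least α_f(k) = (k−1)/(f⁻¹(k+1)−2). -/

import Mathlib

/-- A page request sequence `σ` conforms to `f` if every window of `n` consecutive
requests contains requests for at most `f n` distinct pages. -/
def Conforms (f : ℕ → ℕ) (σ : List ℕ) : Prop :=
  ∀ w : List ℕ, w <:+: σ → w.toFinset.card ≤ f w.length

/-- `f` is approximately concave: `f 1 = 1`, `f 2 = 2`, `f (n+1) ∈ {f n, f n + 1}`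
for all `n ≥ 1`, and `m_y = |{n ≥ 1 : f n = y}|` is nondecreasing over attained values. -/
def ApproxConcave (f : ℕ → ℕ) : Prop :=
  f 1 = 1 ∧ f 2 = 2 ∧
    (∀ n, 1 ≤ n → f (n + 1) = f n ∨ f (n + 1) = f n + 1) ∧
    (∀ y z, (∃ n, 1 ≤ n ∧ f n = y) → (∃ n, 1 ≤ n ∧ f n = z) → y ≤ z →
      {n | 1 ≤ n ∧ f n = y}.encard ≤ {n | 1 ≤ n ∧ f n = z}.encard)

/-- `fInv f y` is the smallest `x ≥ 1` with `f x = y`. -/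
noncomputable def fInv (f : ℕ → ℕ) (y : ℕ) : ℕ := sInf {x | 1 ≤ x ∧ f x = y}

/-- `α_f(k) = (k - 1) / (f⁻¹(k+1) - 2)`. -/
noncomputable def alphaF (f : ℕ → ℕ) (k : ℕ) : ℝ :=
  ((k : ℝ) - 1) / ((fInv f (k + 1) : ℝ) - 2)

/-- One step of a generic deterministic cache replacement policy with cache size `k`:
`hist` is the list of requests seen so far (excluding the current request `p`), `C`
the current cache.  On a fault with a full cache, the page
`evict (hist ++ [p]) C` (a deterministic function of the requests seen so far) is evicted. -/
def policyStep (k : ℕ) (evict : List ℕ → Finset ℕ → ℕ)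
    (hist : List ℕ) (C : Finset ℕ) (p : ℕ) : Finset ℕ :=
  if p ∈ C then C
  else if C.card < k then insert p C
  else insert p (C.erase (evict (hist ++ [p]) C))

/-- The number of faults of the policy on a request sequence, given the history so far
and the current cache. -/
def policyFaults (k : ℕ) (evict : List ℕ → Finset ℕ → ℕ) :
    List ℕ → Finset ℕ → List ℕ → ℕ
  | _, _, [] => 0
  | hist, C, p :: rest =>
      (if p ∈ C then 0 else 1) +
        policyFaults k evict (hist ++ [p]) (policyStep k evict hist C p) rest





variable {f : ℕ → ℕ} {k : ℕ}

lemma fmono (hf : ApproxConcave f) : ∀ a b, 1 ≤ a → a ≤ b → f a ≤ f b := by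
  intro a b ha hab
  induction b, hab using Nat.le_induction with
  | base => exact le_refl _
  | succ n hn ih => rcases hf.2.2.1 n (le_trans ha hn) with h | h <;> omega

lemma f_iv (hf : ApproxConcave f) : ∀ n, 1 ≤ n → ∀ j, 1 ≤ j → j ≤ f n →
    ∃ x, 1 ≤ x ∧ x ≤ n ∧ f x = j := by
  intro n
  induction n with
  | zero => omega
  | succ n ih =>
    intro _ j hj hjf
    rcases Nat.eq_zero_or_pos n with h0 | h1
    · subst h0
      simp only [Nat.zero_add] at hjf ⊢
      exact ⟨1, le_refl _, le_refl _, by have := hf.1; omega⟩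
    · by_cases hc : j ≤ f n
      · obtain ⟨x, hx⟩ := ih h1 j hj hc
        exact ⟨x, hx.1, hx.2.1.trans (Nat.le_succ n), hx.2.2⟩
      · rcases hf.2.2.1 n h1 with h | h
        · exact ⟨n+1, by omega, le_refl _, by omega⟩
        · exact ⟨n+1, by omega, le_refl _, by omega⟩

lemma attain (hf : ApproxConcave f) (hrange : ∃ n, 1 ≤ n ∧ f n = k + 1) :
    ∀ j, 1 ≤ j → j ≤ k + 1 → ∃ n, 1 ≤ n ∧ f n = j := by
  obtain ⟨n0, hn0, hfn0⟩ := hrange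
  intro j hj hjk
  obtain ⟨x, hx1, _, hx3⟩ := f_iv hf n0 hn0 j hj (by omega)
  exact ⟨x, hx1, hx3⟩

lemma fInv_spec {j : ℕ} (h : ∃ n, 1 ≤ n ∧ f n = j) : 1 ≤ fInv f j ∧ f (fInv f j) = j := by
  have hne : {x | 1 ≤ x ∧ f x = j}.Nonempty := by
    obtain ⟨n, h1, h2⟩ := h; exact ⟨n, h1, h2⟩
  exact Nat.sInf_mem hne

lemma fInv_min (h1 : 1 ≤ n) (h2 : f n = j) : fInv f j ≤ n := Nat.sInf_le ⟨h1, h2⟩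

lemma fInv_le_iff (hf : ApproxConcave f) (hj : 1 ≤ j) (hatt : ∃ n, 1 ≤ n ∧ f n = j)
    {n : ℕ} (hn : 1 ≤ n) : fInv f j ≤ n ↔ j ≤ f n := by
  constructor
  · intro h
    calc j = f (fInv f j) := (fInv_spec hatt).2.symm
    _ ≤ f n := fmono hf _ _ (fInv_spec hatt).1 h
  · intro h
    obtain ⟨x, hx1, hx2, hx3⟩ := f_iv hf n hn j hj h
    exact le_trans (fInv_min hx1 hx3) hx2

lemma fInv_lt (hf : ApproxConcave f) (hj : 1 ≤ j) (hatt : ∃ n, 1 ≤ n ∧ f n = j)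
    (hatt' : ∃ n, 1 ≤ n ∧ f n = j + 1) : fInv f j < fInv f (j+1) := by
  have h1 := fInv_spec hatt
  have h2 := fInv_spec hatt'
  have : fInv f j ≤ fInv f (j+1) := by
    rw [fInv_le_iff hf hj hatt h2.1]; omega
  rcases Nat.eq_or_lt_of_le this with h | h
  · exfalso; rw [h] at h1; omega
  · exact h

lemma fInv_one (hf : ApproxConcave f) : fInv f 1 = 1 :=
  le_antisymm (fInv_min (le_refl _) hf.1) (fInv_spec ⟨1, le_refl _, hf.1⟩).1

lemma fInv_two (hf : ApproxConcave f) : fInv f 2 = 2 := by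
  have hatt : ∃ n, 1 ≤ n ∧ f n = 2 := ⟨2, by omega, hf.2.1⟩
  have hs := fInv_spec hatt
  have hne : fInv f 2 ≠ 1 := by intro h; rw [h] at hs; have := hf.1; omega
  have := fInv_min (n := 2) (by omega) hf.2.1
  omega

lemma level_eq (hf : ApproxConcave f) (hrange : ∃ n, 1 ≤ n ∧ f n = k + 1)
    {y : ℕ} (hy : 1 ≤ y) (hyk : y ≤ k) :
    {n | 1 ≤ n ∧ f n = y} = Set.Ico (fInv f y) (fInv f (y+1)) := by
  have hatt := attain hf hrange y hy (by omega)
  have hatt' := attain hf hrange (y+1) (by omega) (by omega)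
  ext x
  simp only [Set.mem_setOf_eq, Set.mem_Ico]
  constructor
  · rintro ⟨hx1, hx2⟩
    refine ⟨fInv_min hx1 hx2, ?_⟩
    by_contra h
    push_neg at h
    have := (fInv_le_iff hf (by omega) hatt' hx1).1 h
    omega
  · rintro ⟨hx1, hx2⟩
    have h1 : 1 ≤ x := le_trans (fInv_spec hatt).1 hx1
    have hge : y ≤ f x := (fInv_le_iff hf hy hatt h1).1 hx1
    have hlt : ¬ (y + 1 ≤ f x) := by
      intro h
      have := (fInv_le_iff hf (by omega) hatt' h1).2 h
      omega
    exact ⟨h1, by omega⟩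

lemma gap_mono (hf : ApproxConcave f) (hrange : ∃ n, 1 ≤ n ∧ f n = k + 1)
    {y z : ℕ} (hy : 1 ≤ y) (hyz : y ≤ z) (hzk : z ≤ k) :
    fInv f (y+1) - fInv f y ≤ fInv f (z+1) - fInv f z := by
  have h := hf.2.2.2 y z (attain hf hrange y hy (by omega))
    (attain hf hrange z (by omega) (by omega)) hyz
  rw [level_eq hf hrange hy (by omega), level_eq hf hrange (by omega) hzk] at h
  rw [← Finset.coe_Ico, ← Finset.coe_Ico] at h
  rw [Set.encard_coe_eq_coe_finsetCard, Set.encard_coe_eq_coe_finsetCard] at h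
  simp only [Nat.card_Ico, Nat.cast_le] at h
  exact h

lemma f_le_self (hf : ApproxConcave f) : ∀ n, 1 ≤ n → f n ≤ n := by
  intro n hn
  induction n with
  | zero => omega
  | succ n ih =>
    rcases Nat.eq_zero_or_pos n with h0 | h1
    · subst h0; simpa using hf.1.le
    · have := ih h1; rcases hf.2.2.1 n h1 with h | h <;> omega

noncomputable def gapF (f : ℕ → ℕ) (j : ℕ) : ℕ := fInv f (j+1) - fInv f j

noncomputable def hgF (f : ℕ → ℕ) (k : ℕ) (x : ℕ) : ℕ := gapF f (min x (k-2) + 2)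

noncomputable def qF (f : ℕ → ℕ) (k : ℕ) (i : ℕ) : ℕ := hgF f k (i % (k-1))

noncomputable def posF (f : ℕ → ℕ) (k : ℕ) : ℕ → ℕ
  | 0 => 1
  | i+1 => posF f k i + qF f k i

section gaps
variable (hf : ApproxConcave f) (hk : 2 ≤ k) (hrange : ∃ n, 1 ≤ n ∧ f n = k + 1)

include hf hk hrange

lemma hg_mono : Monotone (hgF f k) := by
  intro x y hxy
  unfold hgF gapF
  exact gap_mono hf hrange (by omega) (by omega)
    (by have := Nat.min_le_right y (k-2); omega)

lemma gapF_pos {j : ℕ} (h2 : 2 ≤ j) (hjk : j ≤ k) : 1 ≤ gapF f j := by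
  have := fInv_lt hf (by omega : 1 ≤ j) (attain hf hrange j (by omega) (by omega))
    (attain hf hrange (j+1) (by omega) (by omega))
  unfold gapF; omega

lemma q_pos (i : ℕ) : 1 ≤ qF f k i := by
  unfold qF hgF
  exact gapF_pos hf hk hrange (by omega) (by have := Nat.min_le_right (i % (k-1)) (k-2); omega)

lemma pos_add (i d : ℕ) :
    posF f k (i + d) = posF f k i + ∑ s ∈ Finset.range d, qF f k (i + s) := by
  induction d with
  | zero => simp [posF]
  | succ d ih =>
    rw [← Nat.add_assoc, posF, ih, Finset.sum_range_succ]
    ring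

lemma pos_strictMono : StrictMono (posF f k) := by
  apply strictMono_nat_of_lt_succ
  intro i
  have := q_pos hf hk hrange i
  show posF f k i < posF f k i + qF f k i
  omega

lemma pos_ge (i : ℕ) : i + 1 ≤ posF f k i := by
  induction i with
  | zero => simp [posF]
  | succ i ih =>
    have := q_pos hf hk hrange i
    show i + 1 + 1 ≤ posF f k i + qF f k i
    omega

lemma qF_eq_of_lt {s : ℕ} (hs : s < k - 1) : qF f k s = gapF f (s + 2) := by
  unfold qF hgF
  rw [Nat.mod_eq_of_lt hs]
  congr 2
  omega

lemma sum_q_init {c : ℕ} (hc : c ≤ k - 1) :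
    (∑ s ∈ Finset.range c, qF f k s) = fInv f (c+2) - 2 ∧ 2 ≤ fInv f (c+2) := by
  induction c with
  | zero =>
    simp [fInv_two hf]
  | succ c ih =>
    obtain ⟨ihs, ih2⟩ := ih (by omega)
    have hlt : fInv f (c+2) < fInv f (c+3) := by
      have h := fInv_lt hf (by omega : 1 ≤ c+2) (attain hf hrange (c+2) (by omega) (by omega))
        (attain hf hrange (c+2+1) (by omega) (by omega))
      rwa [show c + 2 + 1 = c + 3 by omega] at h
    rw [Finset.sum_range_succ, ihs, qF_eq_of_lt hf hk hrange (by omega)]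
    unfold gapF
    rw [show c + 2 + 1 = c + 3 by omega, show c + 1 + 2 = c + 3 by omega]
    constructor <;> omega

lemma period_sum (i : ℕ) :
    ∑ s ∈ Finset.range (k-1), qF f k (i * (k-1) + s) = fInv f (k+1) - 2 := by
  have h1 : ∀ s ∈ Finset.range (k-1), qF f k (i * (k-1) + s) = qF f k s := by
    intro s hs
    simp only [Finset.mem_range] at hs
    unfold qF
    congr 1
    rw [Nat.mul_comm, Nat.mul_add_mod, Nat.mod_eq_of_lt hs]
  rw [Finset.sum_congr rfl h1]
  have := sum_q_init hf hk hrange (le_refl (k-1))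
  have hk1 : k - 1 + 2 = k + 1 := by omega
  rw [hk1] at this
  exact this.1

end gaps

lemma mono_sum_le {h : ℕ → ℕ} (hm : Monotone h) :
    ∀ (n : ℕ) (S : Finset ℕ), S.card = n →
      (∑ x ∈ Finset.range n, h x) ≤ ∑ x ∈ S, h x := by
  intro n
  induction n with
  | zero => simp
  | succ n ih =>
    intro S hS
    have hne : S.Nonempty := by rw [← Finset.card_pos, hS]; omega
    set M := S.max' hne with hM
    have hMS : M ∈ S := S.max'_mem hne
    have hcard : (S.erase M).card = n := by
      rw [Finset.card_erase_of_mem hMS, hS]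
      omega
    have hsub : S ⊆ Finset.range (M+1) := by
      intro x hx
      simp only [Finset.mem_range]
      have := S.le_max' x hx
      omega
    have hMn : n ≤ M := by
      have := Finset.card_le_card hsub
      simp only [Finset.card_range] at this
      omega
    calc (∑ x ∈ Finset.range (n+1), h x) = (∑ x ∈ Finset.range n, h x) + h n := by
          rw [Finset.sum_range_succ]
      _ ≤ (∑ x ∈ S.erase M, h x) + h M := Nat.add_le_add (ih _ hcard) (hm hMn)
      _ = ∑ x ∈ S, h x := by rw [Finset.sum_erase_add _ _ hMS]

lemma mod_inj {k : ℕ} (hk : 2 ≤ k) {c : ℕ} (hc : c ≤ k - 1) (i : ℕ) :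
    Set.InjOn (fun s => (i + s) % (k-1)) (Finset.range c) := by
  intro s hs s' hs' hss
  simp only [Finset.coe_range, Set.mem_Iio] at hs hs'
  rcases Nat.le_total s s' with hle | hle
  · have hdvd : (k-1) ∣ (i + s') - (i + s) :=
      (Nat.modEq_iff_dvd' (by omega)).mp hss
    have := Nat.eq_zero_of_dvd_of_lt hdvd
    omega
  · have hdvd : (k-1) ∣ (i + s) - (i + s') :=
      (Nat.modEq_iff_dvd' (by omega)).mp hss.symm
    have := Nat.eq_zero_of_dvd_of_lt hdvd
    omega

lemma sum_q_shift (hf : ApproxConcave f) (hk : 2 ≤ k) (hrange : ∃ n, 1 ≤ n ∧ f n = k + 1)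
    {c : ℕ} (hc : c ≤ k - 1) (i : ℕ) :
    (∑ s ∈ Finset.range c, qF f k s) ≤ ∑ s ∈ Finset.range c, qF f k (i + s) := by
  have hrw : ∀ s ∈ Finset.range c, qF f k (i + s) = hgF f k ((i + s) % (k-1)) := by
    intro s _; rfl
  rw [Finset.sum_congr rfl hrw]
  rw [← Finset.sum_image (f := fun x => hgF f k x)
    (g := fun s => (i + s) % (k-1)) (fun x hx y hy hxy => mod_inj hk hc i hx hy hxy)]
  have hcard : ((Finset.range c).image (fun s => (i + s) % (k-1))).card = c := by
    rw [Finset.card_image_of_injOn (mod_inj hk hc i), Finset.card_range]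
  have hlhs : ∀ s ∈ Finset.range c, qF f k s = hgF f k s := by
    intro s hs
    simp only [Finset.mem_range] at hs
    unfold qF
    rw [Nat.mod_eq_of_lt (by omega)]
  rw [Finset.sum_congr rfl hlhs]
  have := mono_sum_le (hg_mono hf hk hrange) c _ hcard
  exact this

def NewAt (f : ℕ → ℕ) (k : ℕ) (t : ℕ) : Prop := ∃ i, posF f k i = t

open Classical in
lemma window_bound (hf : ApproxConcave f) (hk : 2 ≤ k)
    (hrange : ∃ n, 1 ≤ n ∧ f n = k + 1) (a n : ℕ) (hn : 1 ≤ n)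
    (hnm : n ≤ fInv f (k+1) - 1) :
    1 + ((Finset.Icc (a+2) (a+n)).filter (NewAt f k)).card ≤ f n := by
  classical
  have hmspec := fInv_spec (j := k+1) hrange
  set m := fInv f (k+1) with hm
  have hmk : k + 1 ≤ m := by
    have := f_le_self hf m hmspec.1
    omega
  have hf1 : 1 ≤ f n := by
    have := fmono hf 1 n (le_refl _) hn
    rw [hf.1] at this
    omega
  set c := ((Finset.Icc (a+2) (a+n)).filter (NewAt f k)).card with hc
  rcases Nat.eq_zero_or_pos c with hc0 | hc1
  · omega
  set I := (Finset.range (a+n+1)).filter (fun i => posF f k i ∈ Finset.Icc (a+2) (a+n))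
    with hI
  have himg : (Finset.Icc (a+2) (a+n)).filter (NewAt f k) = I.image (posF f k) := by
    ext t
    simp only [Finset.mem_filter, Finset.mem_image, Finset.mem_Icc, Finset.mem_range, hI]
    constructor
    · rintro ⟨⟨ht1, ht2⟩, i, hi⟩
      refine ⟨i, ⟨?_, ?_, ?_⟩, hi⟩
      · have := pos_ge hf hk hrange i
        omega
      · omega
      · omega
    · rintro ⟨i, ⟨_, hi2, hi3⟩, hit⟩
      exact ⟨⟨by omega, by omega⟩, i, hit⟩
  have hcI : c = I.card := by
    rw [hc, himg, Finset.card_image_of_injective _ (pos_strictMono hf hk hrange).injective]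
  have hne : I.Nonempty := by
    rw [← Finset.card_pos, ← hcI]; omega
  set i₁ := I.min' hne with hi₁
  set i₂ := I.max' hne with hi₂
  have hmem1 : i₁ ∈ I := I.min'_mem hne
  have hmem2 : i₂ ∈ I := I.max'_mem hne
  have hp1 : a + 2 ≤ posF f k i₁ ∧ posF f k i₁ ≤ a + n := by
    have := hmem1; rw [hI] at this
    simp only [Finset.mem_filter, Finset.mem_Icc] at this
    exact this.2
  have hp2 : a + 2 ≤ posF f k i₂ ∧ posF f k i₂ ≤ a + n := by
    have := hmem2; rw [hI] at this
    simp only [Finset.mem_filter, Finset.mem_Icc] at this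
    exact this.2
  have hIcc : I = Finset.Icc i₁ i₂ := by
    ext i
    simp only [Finset.mem_Icc]
    constructor
    · intro hi
      exact ⟨I.min'_le i hi, I.le_max' i hi⟩
    · rintro ⟨h1, h2⟩
      rw [hI]
      simp only [Finset.mem_filter, Finset.mem_Icc, Finset.mem_range]
      have hmono := (pos_strictMono hf hk hrange).monotone
      have q1 := hmono h1
      have q2 := hmono h2
      have hi2r : i₂ < a + n + 1 := by
        have := hmem2; rw [hI] at this
        simp only [Finset.mem_filter, Finset.mem_range] at this
        exact this.1
      exact ⟨by omega, by omega, by omega⟩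
  have hcval : c = i₂ - i₁ + 1 := by
    rw [hcI, hIcc, Nat.card_Icc]
    have : i₁ ≤ i₂ := I.min'_le i₂ hmem2
    omega
  set d := i₂ - i₁ with hd
  have hle12 : i₁ ≤ i₂ := I.min'_le i₂ hmem2
  have hsum : posF f k i₂ = posF f k i₁ + ∑ s ∈ Finset.range d, qF f k (i₁ + s) := by
    rw [← pos_add hf hk hrange i₁ d]
    congr 1
    omega
  have hsum_le : (∑ s ∈ Finset.range d, qF f k (i₁ + s)) ≤ n - 2 := by omega
  have hdk : d ≤ k - 2 := by
    by_contra hcon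
    push_neg at hcon
    have hsub : Finset.range (k-1) ⊆ Finset.range d := by
      intro x hx; simp only [Finset.mem_range] at hx ⊢; omega
    have h1 : (∑ s ∈ Finset.range (k-1), qF f k (i₁ + s)) ≤
        ∑ s ∈ Finset.range d, qF f k (i₁ + s) :=
      Finset.sum_le_sum_of_subset hsub
    have h2 := sum_q_shift hf hk hrange (le_refl (k-1)) i₁
    have h3 := (sum_q_init hf hk hrange (le_refl (k-1))).1
    rw [show k - 1 + 2 = k + 1 by omega] at h3
    omega
  have h2 := sum_q_shift hf hk hrange (show d ≤ k - 1 by omega) i₁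
  have h3 := sum_q_init hf hk hrange (show d ≤ k - 1 by omega)
  have hfn : fInv f (d+2) ≤ n := by omega
  have hdfn : d + 2 ≤ f n :=
    (fInv_le_iff hf (by omega) (attain hf hrange (d+2) (by omega) (by omega)) hn).1 hfn
  omega


def runCache (k : ℕ) (evict : List ℕ → Finset ℕ → ℕ) :
    List ℕ → Finset ℕ → List ℕ → Finset ℕ
  | _, C, [] => C
  | hist, C, p :: rest => runCache k evict (hist ++ [p]) (policyStep k evict hist C p) rest

lemma runCache_append (k : ℕ) (evict : List ℕ → Finset ℕ → ℕ) :
    ∀ (xs : List ℕ) (hist : List ℕ) (C : Finset ℕ) (p : ℕ),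
    runCache k evict hist C (xs ++ [p]) =
      policyStep k evict (hist ++ xs) (runCache k evict hist C xs) p := by
  intro xs
  induction xs with
  | nil => intro hist C p; simp [runCache]
  | cons q rest ih =>
    intro hist C p
    show runCache k evict (hist ++ [q]) _ (rest ++ [p]) = _
    rw [ih]
    simp [runCache, List.append_assoc]

lemma faults_append (k : ℕ) (evict : List ℕ → Finset ℕ → ℕ) :
    ∀ (xs : List ℕ) (hist : List ℕ) (C : Finset ℕ) (p : ℕ),
    policyFaults k evict hist C (xs ++ [p]) =
      policyFaults k evict hist C xs +
        (if p ∈ runCache k evict hist C xs then 0 else 1) := by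
  intro xs
  induction xs with
  | nil => intro hist C p; simp [policyFaults, runCache]; congr 1
  | cons q rest ih =>
    intro hist C p
    show (if q ∈ C then 0 else 1) + policyFaults k evict _ _ (rest ++ [p]) = _
    rw [ih]
    show _ = (if q ∈ C then 0 else 1) + policyFaults k evict _ _ rest + _
    rw [Nat.add_assoc]
    rfl

noncomputable def pickU (U C : Finset ℕ) : ℕ := sInf {p : ℕ | p ∈ U \ C}

lemma pick_mem {U C : Finset ℕ} (h : C ⊆ U) (hcard : C.card < U.card) :
    pickU U C ∈ U \ C := by
  have hne : (U \ C).Nonempty := Finset.sdiff_nonempty.2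
    (fun hsub => absurd (Finset.card_le_card hsub) (by omega))
  obtain ⟨x, hx⟩ := hne
  exact Nat.sInf_mem (⟨x, hx⟩ : {p : ℕ | p ∈ U \ C}.Nonempty)

open Classical in
noncomputable def seqL (f : ℕ → ℕ) (k : ℕ) (evict : List ℕ → Finset ℕ → ℕ)
    (C₀ U : Finset ℕ) : ℕ → List ℕ
  | 0 => []
  | t+1 =>
    let h := seqL f k evict C₀ U t
    h ++ [if NewAt f k (t+1) then pickU U (runCache k evict [] C₀ h) else h.getLastD 0]

section seq

variable (f : ℕ → ℕ) (k : ℕ) (evict : List ℕ → Finset ℕ → ℕ) (C₀ U : Finset ℕ)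

noncomputable def reqF (t : ℕ) : ℕ := (seqL f k evict C₀ U t).getLastD 0

noncomputable def CachF (t : ℕ) : Finset ℕ := runCache k evict [] C₀ (seqL f k evict C₀ U t)

open Classical in
lemma seq_unfold (t : ℕ) : seqL f k evict C₀ U (t+1) = seqL f k evict C₀ U t ++
    [if NewAt f k (t+1) then pickU U (runCache k evict [] C₀ (seqL f k evict C₀ U t))
     else (seqL f k evict C₀ U t).getLastD 0] := rfl

open Classical in
lemma req_succ (t : ℕ) : reqF f k evict C₀ U (t+1) =
    if NewAt f k (t+1) then pickU U (CachF f k evict C₀ U t) else reqF f k evict C₀ U t := by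
  unfold reqF CachF
  rw [seq_unfold, List.getLastD_concat]

lemma seq_succ (t : ℕ) : seqL f k evict C₀ U (t+1) =
    seqL f k evict C₀ U t ++ [reqF f k evict C₀ U (t+1)] := by
  rw [seq_unfold, req_succ]
  rfl

lemma seq_len (t : ℕ) : (seqL f k evict C₀ U t).length = t := by
  induction t with
  | zero => rfl
  | succ t ih => rw [seq_succ, List.length_append, ih]; rfl

lemma Cach_succ (t : ℕ) : CachF f k evict C₀ U (t+1) =
    policyStep k evict (seqL f k evict C₀ U t) (CachF f k evict C₀ U t)
      (reqF f k evict C₀ U (t+1)) := by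
  unfold CachF
  rw [seq_succ, runCache_append]
  simp

lemma faults_succ (t : ℕ) : policyFaults k evict [] C₀ (seqL f k evict C₀ U (t+1)) =
    policyFaults k evict [] C₀ (seqL f k evict C₀ U t) +
      (if reqF f k evict C₀ U (t+1) ∈ CachF f k evict C₀ U t then 0 else 1) := by
  rw [seq_succ, faults_append]
  rfl

lemma newAt_one : NewAt f k 1 := ⟨0, rfl⟩

variable {f k evict C₀ U}

lemma invar (hk : 2 ≤ k) (hvalid : ∀ hist C, C.Nonempty → evict hist C ∈ C)
    (hC₀ : C₀.card = k) (hU : C₀ ⊆ U) (hUcard : U.card = k+1) :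
    ∀ t, CachF f k evict C₀ U t ⊆ U ∧ (CachF f k evict C₀ U t).card = k ∧
      (1 ≤ t → reqF f k evict C₀ U t ∈ CachF f k evict C₀ U t) ∧
      (∀ x ∈ seqL f k evict C₀ U t, x ∈ U) := by
  intro t
  induction t with
  | zero =>
    refine ⟨hU, hC₀, by omega, ?_⟩
    intro x hx
    simp [seqL] at hx
  | succ t ih =>
    obtain ⟨ihsub, ihcard, ihreq, ihmem⟩ := ih
    have hp : reqF f k evict C₀ U (t+1) ∈ U := by
      rw [req_succ]
      split_ifs with hnew
      · exact (Finset.mem_sdiff.1 (pick_mem ihsub (by omega))).1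
      · have ht : 1 ≤ t := by
          rcases Nat.eq_zero_or_pos t with h0 | h1
          · subst h0; exact absurd (newAt_one f k) hnew
          · exact h1
        exact ihsub (ihreq ht)
    have hmain : CachF f k evict C₀ U (t+1) ⊆ U ∧ (CachF f k evict C₀ U (t+1)).card = k ∧
        reqF f k evict C₀ U (t+1) ∈ CachF f k evict C₀ U (t+1) := by
      rw [Cach_succ]
      unfold policyStep
      split_ifs with h1 h2
      · exact ⟨ihsub, ihcard, h1⟩
      · omega
      · have hev : evict (seqL f k evict C₀ U t ++ [reqF f k evict C₀ U (t+1)])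
            (CachF f k evict C₀ U t) ∈ CachF f k evict C₀ U t :=
          hvalid _ _ (by rw [← Finset.card_pos, ihcard]; omega)
        refine ⟨?_, ?_, Finset.mem_insert_self _ _⟩
        · intro x hx
          rcases Finset.mem_insert.1 hx with h | h
          · exact h ▸ hp
          · exact ihsub (Finset.mem_of_mem_erase h)
        · rw [Finset.card_insert_of_notMem (fun hc => h1 (Finset.mem_of_mem_erase hc)),
            Finset.card_erase_of_mem hev, ihcard]
          omega
    refine ⟨hmain.1, hmain.2.1, fun _ => hmain.2.2, ?_⟩
    intro x hx
    rw [seq_succ] at hx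
    rcases List.mem_append.1 hx with h | h
    · exact ihmem x h
    · simp at h
      exact h ▸ hp

open Classical in
lemma fault_count (hk : 2 ≤ k) (hvalid : ∀ hist C, C.Nonempty → evict hist C ∈ C)
    (hC₀ : C₀.card = k) (hU : C₀ ⊆ U) (hUcard : U.card = k+1) :
    ∀ t, policyFaults k evict [] C₀ (seqL f k evict C₀ U t) =
      ((Finset.Icc 1 t).filter (NewAt f k)).card := by
  intro t
  induction t with
  | zero => simp [seqL, policyFaults]
  | succ t ih =>
    rw [faults_succ, ih]
    have hIcc : Finset.Icc 1 (t+1) = insert (t+1) (Finset.Icc 1 t) := by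
      ext x
      simp only [Finset.mem_Icc, Finset.mem_insert]
      omega
    rw [hIcc, Finset.filter_insert]
    obtain ⟨ihsub, ihcard, ihreq, _⟩ := invar hk hvalid hC₀ hU hUcard t
    by_cases hnew : NewAt f k (t+1)
    · rw [if_pos hnew, Finset.card_insert_of_notMem (by
        simp only [Finset.mem_filter, Finset.mem_Icc]; omega)]
      have hnot : reqF f k evict C₀ U (t+1) ∉ CachF f k evict C₀ U t := by
        rw [req_succ, if_pos hnew]
        exact (Finset.mem_sdiff.1 (pick_mem ihsub (by omega))).2
      rw [if_neg hnot]
    · rw [if_neg hnew]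
      have hmem : reqF f k evict C₀ U (t+1) ∈ CachF f k evict C₀ U t := by
        rw [req_succ, if_neg hnew]
        have ht : 1 ≤ t := by
          rcases Nat.eq_zero_or_pos t with h0 | h1
          · subst h0; exact absurd (newAt_one f k) hnew
          · exact h1
        exact ihreq ht
      rw [if_pos hmem]
      omega

end seq


section final

variable {f : ℕ → ℕ} {k : ℕ} {evict : List ℕ → Finset ℕ → ℕ} {C₀ U : Finset ℕ}

lemma seq_get : ∀ T j, j < T →
    (seqL f k evict C₀ U T)[j]? = some (reqF f k evict C₀ U (j+1)) := by
  intro T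
  induction T with
  | zero => omega
  | succ T ih =>
    intro j hj
    rw [seq_succ]
    rcases Nat.lt_or_ge j T with h | h
    · rw [List.getElem?_append_left (by rw [seq_len]; exact h)]
      exact ih j h
    · have hjT : j = T := by omega
      subst hjT
      rw [List.getElem?_append_right (by rw [seq_len])]
      rw [seq_len]
      simp

lemma mem_window {T : ℕ} {w : List ℕ} (hw : w <:+: seqL f k evict C₀ U T) :
    ∃ a, a + w.length ≤ T ∧
      ∀ x ∈ w, ∃ i, i < w.length ∧ x = reqF f k evict C₀ U (a+1+i) := by
  obtain ⟨s, t', hst⟩ := hw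
  refine ⟨s.length, ?_, ?_⟩
  · have := congrArg List.length hst
    simp only [List.length_append, seq_len] at this
    omega
  · intro x hx
    obtain ⟨i, hi, hxi⟩ := List.getElem_of_mem hx
    refine ⟨i, hi, ?_⟩
    have h1 : (seqL f k evict C₀ U T)[s.length + i]? = some x := by
      rw [← hst, List.getElem?_append_left (by simp only [List.length_append]; omega),
        List.getElem?_append_right (Nat.le_add_right _ _)]
      simp only [Nat.add_sub_cancel_left]
      rw [List.getElem?_eq_getElem hi, hxi]
    have h2 : s.length + i < T := by
      have := congrArg List.length hst
      simp only [List.length_append, seq_len] at this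
      omega
    rw [seq_get T (s.length + i) h2] at h1
    have := Option.some.inj h1
    rw [← this]
    congr 1
    omega

open Classical in
lemma seq_conforms (hf : ApproxConcave f) (hk : 2 ≤ k)
    (hrange : ∃ n, 1 ≤ n ∧ f n = k + 1)
    (hvalid : ∀ hist C, C.Nonempty → evict hist C ∈ C)
    (hC₀ : C₀.card = k) (hU : C₀ ⊆ U) (hUcard : U.card = k+1) (T : ℕ) :
    Conforms f (seqL f k evict C₀ U T) := by
  intro w hw
  set n := w.length with hn
  rcases Nat.eq_zero_or_pos n with hn0 | hn1
  · have hwnil : w = [] := by rw [← List.length_eq_zero_iff]; omega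
    subst hwnil
    simp
  have hmspec := fInv_spec (j := k+1) hrange
  have hmk : k + 1 ≤ fInv f (k+1) := by
    have := f_le_self hf _ hmspec.1
    omega
  rcases le_or_gt n (fInv f (k+1) - 1) with hsmall | hlarge
  · -- small window
    obtain ⟨a, ha, hmem⟩ := mem_window hw
    set S := insert (reqF f k evict C₀ U (a+1))
      (((Finset.Icc (a+2) (a+n)).filter (NewAt f k)).image (reqF f k evict C₀ U)) with hS
    have hclaim : ∀ d, d < n → reqF f k evict C₀ U (a+1+d) ∈ S := by
      intro d
      induction d with
      | zero => intro _; exact Finset.mem_insert_self _ _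
      | succ d ihd =>
        intro hd
        by_cases hnew : NewAt f k (a+1+(d+1))
        · apply Finset.mem_insert_of_mem
          apply Finset.mem_image_of_mem
          simp only [Finset.mem_filter, Finset.mem_Icc]
          exact ⟨⟨by omega, by omega⟩, hnew⟩
        · have he : a+1+(d+1) = (a+1+d)+1 := by omega
          rw [he] at hnew ⊢
          rw [req_succ, if_neg hnew]
          exact ihd (by omega)
    have hsub : w.toFinset ⊆ S := by
      intro x hx
      rw [List.mem_toFinset] at hx
      obtain ⟨i, hi, rfl⟩ := hmem x hx
      exact hclaim i hi
    calc w.toFinset.card ≤ S.card := Finset.card_le_card hsub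
      _ ≤ (((Finset.Icc (a+2) (a+n)).filter (NewAt f k)).image
            (reqF f k evict C₀ U)).card + 1 := Finset.card_insert_le _ _
      _ ≤ ((Finset.Icc (a+2) (a+n)).filter (NewAt f k)).card + 1 := by
          have := Finset.card_image_le (s := (Finset.Icc (a+2) (a+n)).filter (NewAt f k))
            (f := reqF f k evict C₀ U)
          omega
      _ ≤ f n := by
          have := window_bound hf hk hrange a n hn1 hsmall
          omega
  · -- large window
    have hfn : k + 1 ≤ f n := by
      apply (fInv_le_iff hf (by omega) hrange (by omega)).1
      omega
    have hsub : w.toFinset ⊆ U := by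
      intro x hx
      rw [List.mem_toFinset] at hx
      exact (invar hk hvalid hC₀ hU hUcard T).2.2.2 x (hw.subset hx)
    calc w.toFinset.card ≤ U.card := Finset.card_le_card hsub
      _ ≤ f n := by omega

lemma pos_periods (hf : ApproxConcave f) (hk : 2 ≤ k)
    (hrange : ∃ n, 1 ≤ n ∧ f n = k + 1) :
    ∀ P, posF f k (P * (k-1)) = 1 + P * (fInv f (k+1) - 2) := by
  intro P
  induction P with
  | zero => simp [posF]
  | succ P ih =>
    rw [show (P+1)*(k-1) = P*(k-1)+(k-1) by ring]
    rw [pos_add hf hk hrange, period_sum hf hk hrange P, ih]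
    ring

open Classical in
lemma new_lb (hf : ApproxConcave f) (hk : 2 ≤ k)
    (hrange : ∃ n, 1 ≤ n ∧ f n = k + 1) (P : ℕ) :
    P * (k-1) ≤ ((Finset.Icc 1 (P * (fInv f (k+1) - 2))).filter (NewAt f k)).card := by
  have hsub : (Finset.range (P*(k-1))).image (posF f k) ⊆
      (Finset.Icc 1 (P * (fInv f (k+1) - 2))).filter (NewAt f k) := by
    intro x hx
    obtain ⟨i, hi, rfl⟩ := Finset.mem_image.1 hx
    simp only [Finset.mem_range] at hi
    simp only [Finset.mem_filter, Finset.mem_Icc]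
    refine ⟨⟨?_, ?_⟩, i, rfl⟩
    · have := pos_ge hf hk hrange i
      omega
    · have h1 := (pos_strictMono hf hk hrange) hi
      rw [pos_periods hf hk hrange] at h1
      omega
  have hcard : ((Finset.range (P*(k-1))).image (posF f k)).card = P*(k-1) := by
    rw [Finset.card_image_of_injective _ (pos_strictMono hf hk hrange).injective,
      Finset.card_range]
  calc P*(k-1) = ((Finset.range (P*(k-1))).image (posF f k)).card := hcard.symm
    _ ≤ _ := Finset.card_le_card hsub

end final


/-- **Theorem 1.1(a)** For every approximately concave `f`, cache size `k ≥ 2` with `k+1`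
in the range of `f`, and deterministic cache replacement policy starting from an arbitrary
full cache of `k` pages, there are arbitrarily long page request sequences conforming to
`f` on which the policy's fault rate is at least `α_f(k)`. -/
theorem stmt0 (f : ℕ → ℕ) (hf : ApproxConcave f) (k : ℕ) (hk : 2 ≤ k)
    (hrange : ∃ n, 1 ≤ n ∧ f n = k + 1)
    (evict : List ℕ → Finset ℕ → ℕ)
    (hvalid : ∀ hist C, C.Nonempty → evict hist C ∈ C)
    (C₀ : Finset ℕ) (hC₀ : C₀.card = k) (N : ℕ) :
    ∃ σ : List ℕ, N ≤ σ.length ∧ Conforms f σ ∧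
      alphaF f k * (σ.length : ℝ) ≤ (policyFaults k evict [] C₀ σ : ℝ) := by
  classical
  have huC : C₀.sup id + 1 ∉ C₀ := by
    intro hmem
    have := Finset.le_sup (f := id) hmem
    simp only [id] at this
    omega
  set U := insert (C₀.sup id + 1) C₀ with hUdef
  have hUsub : C₀ ⊆ U := Finset.subset_insert _ _
  have hUcard : U.card = k + 1 := by rw [hUdef, Finset.card_insert_of_notMem huC, hC₀]
  have hmspec := fInv_spec (j := k+1) hrange
  have hmk : k + 1 ≤ fInv f (k+1) := by
    have := f_le_self hf _ hmspec.1
    omega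
  have hL1 : 1 ≤ fInv f (k+1) - 2 := by omega
  refine ⟨seqL f k evict C₀ U (N * (fInv f (k+1) - 2)), ?_, ?_, ?_⟩
  · rw [seq_len]
    calc N = N * 1 := by ring
      _ ≤ N * (fInv f (k+1) - 2) := Nat.mul_le_mul_left N hL1
  · exact seq_conforms hf hk hrange hvalid hC₀ hUsub hUcard _
  · rw [seq_len, fault_count hk hvalid hC₀ hUsub hUcard]
    have hlb := new_lb hf hk hrange N
    have hcast : ((N * (fInv f (k+1) - 2) : ℕ) : ℝ) = (N : ℝ) * ((fInv f (k+1) : ℝ) - 2) := by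
      push_cast [Nat.cast_sub (show 2 ≤ fInv f (k+1) by omega)]
      ring
    have hne : ((fInv f (k+1) : ℝ) - 2) ≠ 0 := by
      have h1 : ((k:ℕ)+1 : ℝ) ≤ (fInv f (k+1) : ℝ) := by exact_mod_cast hmk
      have h2 : (2:ℝ) ≤ (k:ℝ) := by exact_mod_cast hk
      push_cast at h1
      linarith
    rw [alphaF, hcast]
    have heq : ((k:ℝ)-1) / ((fInv f (k+1):ℝ) - 2) * ((N:ℝ) * ((fInv f (k+1):ℝ)-2)) =
        ((k:ℝ)-1) * (N:ℝ) := by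
      field_simp
    rw [heq]
    have hconv : ((k:ℝ)-1) * (N:ℝ) = ((N * (k-1) : ℕ) : ℝ) := by
      push_cast [Nat.cast_sub (show 1 ≤ k by omega)]
      ring
    rw [hconv]
    exact_mod_cast hlb
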